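/- Let E be a 3-dimensional real inner product space and R an algebraic curvature tensor on E with signed sectional curvatures and cvc(0). Then the following are equivalent: (i) every sectional curvature of R vanishes, i.e., R(x,y,y,x) = 0 for all orthonormal x, y ∈ E; (ii) there exist two linearly independent unit vectors v₁, v₂ ∈ E such that R(w, v_i)v_i = 0 for every w orthogonal to v_i, for i = 1, 2; (iii) for every unit vector v ∈ E and every w orthogonal to v, R(w,v)v = 0. -/

import Mathlib

open scoped RealInnerProductSpace

/-- An algebraic curvature tensor on a real inner product space `E`: a multilinear map
`R : E × E × E × E → ℝ` with the symmetries of the Riemann curvature tensor.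
For vectors `x y z`, the value `R x y z ·` represents the linear functional
`w ↦ ⟨R(x,y)z, w⟩` determined by the curvature operator `R(x,y)z`. -/
structure AlgCurvTensor (E : Type*) [NormedAddCommGroup E] [InnerProductSpace ℝ E] where
  R : E →ₗ[ℝ] E →ₗ[ℝ] E →ₗ[ℝ] E →ₗ[ℝ] ℝ
  antisym_fst : ∀ x y z w : E, R x y z w = - R y x z w
  antisym_snd : ∀ x y z w : E, R x y z w = - R x y w z
  pair_symm : ∀ x y z w : E, R x y z w = R z w x y
  bianchi : ∀ x y z w : E, R x y z w + R y z x w + R z x y w = 0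

/-- `T` has signed sectional curvatures: either all sectional curvatures are `≥ 0`
or all are `≤ 0`. -/
def AlgCurvTensor.SignedSec {E : Type*} [NormedAddCommGroup E] [InnerProductSpace ℝ E]
    (T : AlgCurvTensor E) : Prop :=
  (∀ x y : E, ‖x‖ = 1 → ‖y‖ = 1 → ⟪x, y⟫ = 0 → 0 ≤ T.R x y y x) ∨
  (∀ x y : E, ‖x‖ = 1 → ‖y‖ = 1 → ⟪x, y⟫ = 0 → T.R x y y x ≤ 0)

/-- `T` has constant vector curvature zero: every unit vector is contained in a flat plane. -/
def AlgCurvTensor.CVC0 {E : Type*} [NormedAddCommGroup E] [InnerProductSpace ℝ E]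
    (T : AlgCurvTensor E) : Prop :=
  ∀ v : E, ‖v‖ = 1 → ∃ w : E, ‖w‖ = 1 ∧ ⟪v, w⟫ = 0 ∧ T.R v w w v = 0


namespace CVCaux
variable {E : Type*} [NormedAddCommGroup E] [InnerProductSpace ℝ E]

noncomputable def crossB (b : OrthonormalBasis (Fin 3) ℝ E) (x y : E) : E :=
  ∑ k : Fin 3, (b.repr x (k+1) * b.repr y (k+2) - b.repr x (k+2) * b.repr y (k+1)) • b k

lemma cross_co (b : OrthonormalBasis (Fin 3) ℝ E) (x y : E) (m : Fin 3) :
    b.repr (crossB b x y) m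
      = b.repr x (m+1) * b.repr y (m+2) - b.repr x (m+2) * b.repr y (m+1) := by
  unfold crossB
  rw [map_sum, WithLp.ofLp_sum, Finset.sum_apply]
  simp only [map_smul, OrthonormalBasis.repr_self, PiLp.smul_apply, EuclideanSpace.single_apply,
    smul_eq_mul, mul_ite, mul_one, mul_zero]
  rw [Finset.sum_ite_eq Finset.univ m]
  simp

lemma inner_co (b : OrthonormalBasis (Fin 3) ℝ E) (u v : E) :
    ⟪u, v⟫ = ∑ i, b.repr u i * b.repr v i := by
  rw [← b.repr.inner_map_map u v, PiLp.inner_apply]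
  exact Finset.sum_congr rfl fun i _ => by simp [mul_comm]

lemma eq_of_co (b : OrthonormalBasis (Fin 3) ℝ E) {u v : E}
    (h : ∀ i, b.repr u i = b.repr v i) : u = v := by
  conv_lhs => rw [← b.sum_repr u]
  conv_rhs => rw [← b.sum_repr v]
  exact Finset.sum_congr rfl fun i _ => by rw [h i]

lemma lagrange (b : OrthonormalBasis (Fin 3) ℝ E) (x y : E) :
    ⟪crossB b x y, crossB b x y⟫ = ⟪x,x⟫ * ⟪y,y⟫ - ⟪x,y⟫^2 := by
  simp only [inner_co b, cross_co, Fin.sum_univ_three, Fin.reduceAdd]; ring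

lemma orth_cross_1 (b : OrthonormalBasis (Fin 3) ℝ E) (x y : E) :
    ⟪x, crossB b x y⟫ = 0 := by
  simp only [inner_co b, cross_co, Fin.sum_univ_three, Fin.reduceAdd]; ring

lemma orth_cross_2 (b : OrthonormalBasis (Fin 3) ℝ E) (x y : E) :
    ⟪y, crossB b x y⟫ = 0 := by
  simp only [inner_co b, cross_co, Fin.sum_univ_three, Fin.reduceAdd]; ring

lemma triple1 (b : OrthonormalBasis (Fin 3) ℝ E) {v n : E} (hv : ‖v‖ = 1)
    (hvn : ⟪v, n⟫ = 0) : crossB b (crossB b v n) v = n := by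
  have hv2 : b.repr v 0 * b.repr v 0 + b.repr v 1 * b.repr v 1 + b.repr v 2 * b.repr v 2 = 1 := by
    have h := inner_co b v v
    rw [real_inner_self_eq_norm_mul_norm, hv, Fin.sum_univ_three] at h
    linarith
  have hd : b.repr v 0 * b.repr n 0 + b.repr v 1 * b.repr n 1 + b.repr v 2 * b.repr n 2 = 0 := by
    have h := inner_co b v n
    rw [hvn, Fin.sum_univ_three] at h
    linarith
  have key : ∀ m : Fin 3, b.repr (crossB b (crossB b v n) v) m = b.repr n m := by
    have k0 : b.repr (crossB b (crossB b v n) v) (0:Fin 3) = b.repr n 0 := by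
      simp only [cross_co, Fin.reduceAdd]
      linear_combination (b.repr n 0) * hv2 - (b.repr v 0) * hd
    have k1 : b.repr (crossB b (crossB b v n) v) (1:Fin 3) = b.repr n 1 := by
      simp only [cross_co, Fin.reduceAdd]
      linear_combination (b.repr n 1) * hv2 - (b.repr v 1) * hd
    have k2 : b.repr (crossB b (crossB b v n) v) (2:Fin 3) = b.repr n 2 := by
      simp only [cross_co, Fin.reduceAdd]
      linear_combination (b.repr n 2) * hv2 - (b.repr v 2) * hd
    intro m
    fin_cases m
    exacts [k0, k1, k2]
  exact eq_of_co b key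

lemma triple2 (b : OrthonormalBasis (Fin 3) ℝ E) {v n : E} (hv : ‖v‖ = 1)
    (hvn : ⟪v, n⟫ = 0) : crossB b v (crossB b n v) = n := by
  have hv2 : b.repr v 0 * b.repr v 0 + b.repr v 1 * b.repr v 1 + b.repr v 2 * b.repr v 2 = 1 := by
    have h := inner_co b v v
    rw [real_inner_self_eq_norm_mul_norm, hv, Fin.sum_univ_three] at h
    linarith
  have hd : b.repr v 0 * b.repr n 0 + b.repr v 1 * b.repr n 1 + b.repr v 2 * b.repr n 2 = 0 := by
    have h := inner_co b v n
    rw [hvn, Fin.sum_univ_three] at h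
    linarith
  have key : ∀ m : Fin 3, b.repr (crossB b v (crossB b n v)) m = b.repr n m := by
    have k0 : b.repr (crossB b v (crossB b n v)) (0:Fin 3) = b.repr n 0 := by
      simp only [cross_co, Fin.reduceAdd]
      linear_combination (b.repr n 0) * hv2 - (b.repr v 0) * hd
    have k1 : b.repr (crossB b v (crossB b n v)) (1:Fin 3) = b.repr n 1 := by
      simp only [cross_co, Fin.reduceAdd]
      linear_combination (b.repr n 1) * hv2 - (b.repr v 1) * hd
    have k2 : b.repr (crossB b v (crossB b n v)) (2:Fin 3) = b.repr n 2 := by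
      simp only [cross_co, Fin.reduceAdd]
      linear_combination (b.repr n 2) * hv2 - (b.repr v 2) * hd
    intro m
    fin_cases m
    exacts [k0, k1, k2]
  exact eq_of_co b key

lemma cross_swap (b : OrthonormalBasis (Fin 3) ℝ E) (x y : E) :
    crossB b y x = - crossB b x y := by
  apply eq_of_co b
  intro i
  rw [map_neg]
  simp only [cross_co, PiLp.neg_apply]
  ring

noncomputable def Gm (b : OrthonormalBasis (Fin 3) ℝ E) (T : AlgCurvTensor E) (k l : Fin 3) : ℝ :=
  T.R (b (k+1)) (b (k+2)) (b (l+1)) (b (l+2))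

noncomputable def Bf (b : OrthonormalBasis (Fin 3) ℝ E) (T : AlgCurvTensor E) (n m : E) : ℝ :=
  ∑ k : Fin 3, ∑ l : Fin 3, Gm b T k l * b.repr n k * b.repr m l

set_option maxHeartbeats 2000000 in
lemma KI (b : OrthonormalBasis (Fin 3) ℝ E) (T : AlgCurvTensor E) (x y z w : E) :
    T.R x y z w = Bf b T (crossB b x y) (crossB b z w) := by
  have hxx : ∀ (i : Fin 3) (z w : E), T.R (b i) (b i) z w = 0 := by
    intro i z w
    have := T.antisym_fst (b i) (b i) z w
    linarith
  have hyy : ∀ (x y : E) (i : Fin 3), T.R x y (b i) (b i) = 0 := by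
    intro x y i
    have := T.antisym_snd x y (b i) (b i)
    linarith
  have h10 : ∀ z w : E, T.R (b 1) (b 0) z w = -T.R (b 0) (b 1) z w := fun z w => T.antisym_fst _ _ _ _
  have h20 : ∀ z w : E, T.R (b 2) (b 0) z w = -T.R (b 0) (b 2) z w := fun z w => T.antisym_fst _ _ _ _
  have h21 : ∀ z w : E, T.R (b 2) (b 1) z w = -T.R (b 1) (b 2) z w := fun z w => T.antisym_fst _ _ _ _
  have g10 : ∀ x y : E, T.R x y (b 1) (b 0) = -T.R x y (b 0) (b 1) := fun x y => T.antisym_snd _ _ _ _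
  have g20 : ∀ x y : E, T.R x y (b 2) (b 0) = -T.R x y (b 0) (b 2) := fun x y => T.antisym_snd _ _ _ _
  have g21 : ∀ x y : E, T.R x y (b 2) (b 1) = -T.R x y (b 1) (b 2) := fun x y => T.antisym_snd _ _ _ _
  have s1 : T.R (b 0) (b 2) (b 0) (b 1) = T.R (b 0) (b 1) (b 0) (b 2) := T.pair_symm _ _ _ _
  have s2 : T.R (b 1) (b 2) (b 0) (b 1) = T.R (b 0) (b 1) (b 1) (b 2) := T.pair_symm _ _ _ _
  have s3 : T.R (b 1) (b 2) (b 0) (b 2) = T.R (b 0) (b 2) (b 1) (b 2) := T.pair_symm _ _ _ _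
  simp only [Bf, cross_co, Gm]
  conv_lhs => rw [← b.sum_repr x, ← b.sum_repr y, ← b.sum_repr z, ← b.sum_repr w]
  simp only [map_sum, map_smul, LinearMap.sum_apply, LinearMap.smul_apply, smul_eq_mul,
    Finset.sum_apply]
  simp only [Fin.sum_univ_three]
  simp only [Fin.reduceAdd]
  simp only [hxx, hyy, h10, h20, h21, g10, g20, g21, s1, s2, s3]
  ring

lemma Gm_symm (b : OrthonormalBasis (Fin 3) ℝ E) (T : AlgCurvTensor E) (k l : Fin 3) :
    Gm b T k l = Gm b T l k := T.pair_symm _ _ _ _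

lemma Bf_symm (b : OrthonormalBasis (Fin 3) ℝ E) (T : AlgCurvTensor E) (n m : E) :
    Bf b T n m = Bf b T m n := by
  unfold Bf
  rw [Finset.sum_comm]
  refine Finset.sum_congr rfl fun k _ => Finset.sum_congr rfl fun l _ => ?_
  rw [Gm_symm]; ring

lemma Bf_add_left (b : OrthonormalBasis (Fin 3) ℝ E) (T : AlgCurvTensor E) (n n' m : E) :
    Bf b T (n + n') m = Bf b T n m + Bf b T n' m := by
  unfold Bf
  rw [← Finset.sum_add_distrib]
  refine Finset.sum_congr rfl fun k _ => ?_
  rw [← Finset.sum_add_distrib]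
  refine Finset.sum_congr rfl fun l _ => ?_
  rw [map_add]
  simp only [PiLp.add_apply]
  ring

lemma Bf_smul_left (b : OrthonormalBasis (Fin 3) ℝ E) (T : AlgCurvTensor E) (c : ℝ) (n m : E) :
    Bf b T (c • n) m = c * Bf b T n m := by
  unfold Bf
  rw [Finset.mul_sum]
  refine Finset.sum_congr rfl fun k _ => ?_
  rw [Finset.mul_sum]
  refine Finset.sum_congr rfl fun l _ => ?_
  rw [map_smul]
  simp only [PiLp.smul_apply, smul_eq_mul]
  ring

lemma Bf_smul_right (b : OrthonormalBasis (Fin 3) ℝ E) (T : AlgCurvTensor E) (c : ℝ) (n m : E) :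
    Bf b T n (c • m) = c * Bf b T n m := by
  rw [Bf_symm, Bf_smul_left, Bf_symm]

lemma Bf_add_right (b : OrthonormalBasis (Fin 3) ℝ E) (T : AlgCurvTensor E) (n m m' : E) :
    Bf b T n (m + m') = Bf b T n m + Bf b T n m' := by
  rw [Bf_symm, Bf_add_left, Bf_symm b T m n, Bf_symm b T m' n]

lemma Bf_neg_right (b : OrthonormalBasis (Fin 3) ℝ E) (T : AlgCurvTensor E) (n m : E) :
    Bf b T n (-m) = - Bf b T n m := by
  have : -m = (-1 : ℝ) • m := by simp
  rw [this, Bf_smul_right]; ring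

lemma sec_eq (b : OrthonormalBasis (Fin 3) ℝ E) (T : AlgCurvTensor E) (x y : E) :
    T.R x y y x = - Bf b T (crossB b x y) (crossB b x y) := by
  rw [KI b T x y y x, cross_swap b x y, Bf_neg_right]

lemma exists_pair [FiniteDimensional ℝ E] (hdim : Module.finrank ℝ E = 3)
    (b : OrthonormalBasis (Fin 3) ℝ E) (n : E) :
    ∃ x y : E, ‖x‖ = 1 ∧ ‖y‖ = 1 ∧ ⟪x, y⟫ = 0 ∧
      n = ⟪n, crossB b x y⟫ • crossB b x y := by
  by_cases hn : n = 0
  · refine ⟨b 0, b 1, b.orthonormal.1 0, b.orthonormal.1 1,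
      b.orthonormal.2 (by decide), ?_⟩
    rw [hn, inner_zero_left, zero_smul]
  · -- orthonormal basis of the orthogonal complement of n
    have hK : Module.finrank ℝ ((ℝ ∙ n)ᗮ) = 2 := by
      haveI : Fact (Module.finrank ℝ E = 2 + 1) := ⟨by omega⟩
      have := @Submodule.finrank_orthogonal_span_singleton ℝ E _ _ _ 2 _ n hn
      omega
    set K := (ℝ ∙ n)ᗮ with hKdef
    let ob : OrthonormalBasis (Fin 2) ℝ K := (stdOrthonormalBasis ℝ K).reindex (finCongr hK)
    set x : E := (ob 0 : E) with hxdef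
    set y : E := (ob 1 : E) with hydef
    have hx : ‖x‖ = 1 := by
      rw [hxdef, Submodule.norm_coe]
      exact ob.orthonormal.1 0
    have hy : ‖y‖ = 1 := by
      rw [hydef, Submodule.norm_coe]
      exact ob.orthonormal.1 1
    have hxy : ⟪x, y⟫ = 0 := by
      rw [hxdef, hydef]
      exact ob.orthonormal.2 (by decide)
    have hmemx : (x : E) ∈ K := (ob 0).2
    have hmemy : (y : E) ∈ K := (ob 1).2
    have hxn : ⟪x, n⟫ = 0 := by
      rw [real_inner_comm]
      exact hmemx n (Submodule.mem_span_singleton_self n)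
    have hyn : ⟪y, n⟫ = 0 := by
      rw [real_inner_comm]
      exact hmemy n (Submodule.mem_span_singleton_self n)
    set c : E := crossB b x y with hcdef
    have hcc : ⟪c, c⟫ = 1 := by
      rw [hcdef, lagrange, real_inner_self_eq_norm_mul_norm, real_inner_self_eq_norm_mul_norm,
        hx, hy, hxy]
      ring
    have hcnorm : ‖c‖ = 1 := by
      have h := real_inner_self_eq_norm_mul_norm c
      nlinarith [norm_nonneg c]
    have hxc : ⟪x, c⟫ = 0 := orth_cross_1 b x y
    have hyc : ⟪y, c⟫ = 0 := orth_cross_2 b x y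
    have hon : Orthonormal ℝ ![x, y, c] := by
      constructor
      · intro i
        fin_cases i <;> simpa using (by assumption : _)
      · intro i j hij
        have hyx : ⟪y, x⟫ = 0 := by rw [real_inner_comm]; exact hxy
        have hcx : ⟪c, x⟫ = 0 := by rw [real_inner_comm]; exact hxc
        have hcy : ⟪c, y⟫ = 0 := by rw [real_inner_comm]; exact hyc
        fin_cases i <;> fin_cases j <;> simp_all
    have card : Fintype.card (Fin 3) = Module.finrank ℝ E := by simp [hdim]
    have hli := hon.linearIndependent
    let bb : Module.Basis (Fin 3) ℝ E := basisOfLinearIndependentOfCardEqFinrank hli card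
    have hbb : ⇑bb = ![x, y, c] := coe_basisOfLinearIndependentOfCardEqFinrank hli card
    let onb : OrthonormalBasis (Fin 3) ℝ E := bb.toOrthonormalBasis (by rwa [hbb])
    have honb : ⇑onb = ![x, y, c] := by
      rw [Module.Basis.coe_toOrthonormalBasis, hbb]
    have hexp : n = ∑ i : Fin 3, ⟪onb i, n⟫ • onb i := by
      conv_lhs => rw [← onb.sum_repr n]
      refine Finset.sum_congr rfl fun i _ => ?_
      rw [onb.repr_apply_apply]
    rw [honb] at hexp
    rw [Fin.sum_univ_three] at hexp
    simp only [Matrix.cons_val_zero, Matrix.cons_val_one, Matrix.head_cons,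
      Matrix.cons_val_two, Matrix.tail_cons] at hexp
    have hnx : ⟪x, n⟫ = 0 := hxn
    have hny : ⟪y, n⟫ = 0 := hyn
    refine ⟨x, y, hx, hy, hxy, ?_⟩
    show n = ⟪n, c⟫ • c
    have hcom : (⟪n, c⟫ : ℝ) = ⟪c, n⟫ := real_inner_comm _ _
    rw [hcom]
    calc n = ⟪x,n⟫ • x + ⟪y,n⟫ • y + ⟪c,n⟫ • c := hexp
    _ = ⟪c,n⟫ • c := by rw [hnx, hny]; simp

lemma Bf_nonpos [FiniteDimensional ℝ E] (hdim : Module.finrank ℝ E = 3)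
    (b : OrthonormalBasis (Fin 3) ℝ E) (T : AlgCurvTensor E)
    (hpos : ∀ x y : E, ‖x‖ = 1 → ‖y‖ = 1 → ⟪x, y⟫ = 0 → 0 ≤ T.R x y y x) :
    ∀ n : E, Bf b T n n ≤ 0 := by
  intro n
  obtain ⟨x, y, hx, hy, hxy, hrep⟩ := exists_pair hdim b n
  have hcc : Bf b T (crossB b x y) (crossB b x y) ≤ 0 := by
    have h1 := hpos x y hx hy hxy
    have h2 := sec_eq b T x y
    linarith
  conv_lhs => rw [hrep]
  rw [Bf_smul_left, Bf_smul_right]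
  nlinarith [sq_nonneg (⟪n, crossB b x y⟫ : ℝ)]

lemma Bf_zero_of_sec0 [FiniteDimensional ℝ E] (hdim : Module.finrank ℝ E = 3)
    (b : OrthonormalBasis (Fin 3) ℝ E) (T : AlgCurvTensor E)
    (hsec : ∀ x y : E, ‖x‖ = 1 → ‖y‖ = 1 → ⟪x, y⟫ = 0 → T.R x y y x = 0) :
    ∀ n : E, Bf b T n n = 0 := by
  intro n
  obtain ⟨x, y, hx, hy, hxy, hrep⟩ := exists_pair hdim b n
  have hcc : Bf b T (crossB b x y) (crossB b x y) = 0 := by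
    have h1 := hsec x y hx hy hxy
    have h2 := sec_eq b T x y
    linarith
  conv_lhs => rw [hrep]
  rw [Bf_smul_left, Bf_smul_right, hcc]
  ring

lemma CS (b : OrthonormalBasis (Fin 3) ℝ E) (T : AlgCurvTensor E)
    (hns : ∀ p : E, Bf b T p p ≤ 0) {n : E} (hn : Bf b T n n = 0) (m : E) :
    Bf b T n m = 0 := by
  set c := Bf b T n m with hc
  set M := Bf b T m m with hM
  have hMle : M ≤ 0 := hns m
  have key : ∀ t : ℝ, 2 * t * c + t^2 * M ≤ 0 := by
    intro t
    have h := hns (n + t • m)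
    rw [Bf_add_left, Bf_add_right, Bf_add_right, Bf_smul_left, Bf_smul_right,
      Bf_smul_left, Bf_smul_right, Bf_symm b T m n] at h
    rw [hn] at h
    nlinarith [h]
  have h1 : (0:ℝ) < 1 - M := by linarith
  have hne : (1 - M) ≠ 0 := ne_of_gt h1
  have h2 := key (c / (1 - M))
  have e : 2 * (c / (1 - M)) * c + (c / (1 - M))^2 * M = c^2 * (2 - M) / (1 - M)^2 := by
    field_simp
    ring
  rw [e] at h2
  have h5 : c^2 * (2 - M) = (c^2 * (2 - M) / (1 - M)^2) * (1 - M)^2 := by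
    field_simp
  have h3 : c^2 * (2 - M) ≤ 0 := by nlinarith [sq_nonneg (1 - M)]
  have h4 : c^2 = 0 := by nlinarith [sq_nonneg c]
  have : c = 0 := by
    have := sq_eq_zero_iff.mp h4
    exact this
  exact this

lemma decompose (b : OrthonormalBasis (Fin 3) ℝ E) {v₁ v₂ : E} (hv₁ : ‖v₁‖ = 1)
    (hv₂ : ‖v₂‖ = 1) (hli : LinearIndependent ℝ ![v₁, v₂]) (p : E) :
    ∃ p₁ p₂ : E, p = p₁ + p₂ ∧ ⟪v₁, p₁⟫ = 0 ∧ ⟪v₂, p₂⟫ = 0 := by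
  set q : E := v₁ - ⟪v₂, v₁⟫ • v₂ with hq
  have hv₂v₂ : (⟪v₂, v₂⟫:ℝ) = 1 := by
    rw [real_inner_self_eq_norm_mul_norm, hv₂]; ring
  have hq2 : ⟪v₂, q⟫ = 0 := by
    rw [hq, inner_sub_right, real_inner_smul_right, hv₂v₂]; ring
  have hqne : q ≠ 0 := by
    intro h
    rw [hq] at h
    have h' : (⟪v₂, v₁⟫:ℝ) • v₂ = v₁ := (sub_eq_zero.mp h).symm
    exact ((linearIndependent_fin2.mp hli).2 ⟪v₂, v₁⟫) h'
  have hq1 : (⟪v₁, q⟫:ℝ) = ⟪q, q⟫ := by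
    have hv1 : v₁ = q + ⟪v₂, v₁⟫ • v₂ := by rw [hq]; abel
    conv_lhs => rw [hv1]
    rw [inner_add_left, real_inner_smul_left, hq2]
    ring
  have hqq : (0:ℝ) < ⟪q, q⟫ := by
    rw [real_inner_self_eq_norm_mul_norm]
    have := norm_pos_iff.mpr hqne
    nlinarith
  have hne : (⟪q, q⟫:ℝ) ≠ 0 := ne_of_gt hqq
  refine ⟨p - (⟪v₁, p⟫ / ⟪q, q⟫) • q, (⟪v₁, p⟫ / ⟪q, q⟫) • q, by abel, ?_, ?_⟩
  · rw [inner_sub_right, real_inner_smul_right, hq1]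
    field_simp
    ring
  · rw [real_inner_smul_right, hq2]; ring

/-- (i) implies the full tensor vanishes. -/
lemma main1 [FiniteDimensional ℝ E] (hdim : Module.finrank ℝ E = 3)
    (b : OrthonormalBasis (Fin 3) ℝ E) (T : AlgCurvTensor E)
    (hsec : ∀ x y : E, ‖x‖ = 1 → ‖y‖ = 1 → ⟪x, y⟫ = 0 → T.R x y y x = 0) :
    ∀ x y z w : E, T.R x y z w = 0 := by
  have hdiag := Bf_zero_of_sec0 hdim b T hsec
  have hall : ∀ n m : E, Bf b T n m = 0 := by
    intro n m
    have h := hdiag (n + m)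
    rw [Bf_add_left, Bf_add_right, Bf_add_right, hdiag n, hdiag m,
      Bf_symm b T m n] at h
    linarith
  intro x y z w
  rw [KI b T x y z w, hall]

/-- (ii) (+ nonneg sec) implies the full tensor vanishes. -/
lemma main2 [FiniteDimensional ℝ E] (hdim : Module.finrank ℝ E = 3)
    (b : OrthonormalBasis (Fin 3) ℝ E) (T : AlgCurvTensor E)
    (hpos : ∀ x y : E, ‖x‖ = 1 → ‖y‖ = 1 → ⟪x, y⟫ = 0 → 0 ≤ T.R x y y x)
    {v₁ v₂ : E} (hv₁ : ‖v₁‖ = 1) (hv₂ : ‖v₂‖ = 1)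
    (hli : LinearIndependent ℝ ![v₁, v₂])
    (h1 : ∀ w : E, ⟪v₁, w⟫ = 0 → ∀ u : E, T.R w v₁ v₁ u = 0)
    (h2 : ∀ w : E, ⟪v₂, w⟫ = 0 → ∀ u : E, T.R w v₂ v₂ u = 0) :
    ∀ x y z w : E, T.R x y z w = 0 := by
  have hns := Bf_nonpos hdim b T hpos
  -- from the Jacobi hypothesis at a unit vector v, Bf n · vanishes for n ⟂ v
  have claim : ∀ v : E, ‖v‖ = 1 → (∀ w : E, ⟪v, w⟫ = 0 → ∀ u : E, T.R w v v u = 0) →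
      ∀ n : E, ⟪v, n⟫ = 0 → ∀ m : E, Bf b T n m = 0 := by
    intro v hv hJ n hvn m
    have hw : ⟪v, crossB b v n⟫ = 0 := orth_cross_1 b v n
    have h := hJ (crossB b v n) hw (crossB b n v)
    rw [KI b T (crossB b v n) v v (crossB b n v)] at h
    rw [triple1 b hv hvn, triple2 b hv hvn] at h
    exact CS b T hns h m
  intro x y z w
  rw [KI b T x y z w]
  obtain ⟨p₁, p₂, hp, hp1, hp2⟩ := decompose b hv₁ hv₂ hli (crossB b x y)
  rw [hp, Bf_add_left, claim v₁ hv₁ h1 p₁ hp1, claim v₂ hv₂ h2 p₂ hp2]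
  ring

noncomputable def negR (f : E →ₗ[ℝ] E →ₗ[ℝ] E →ₗ[ℝ] E →ₗ[ℝ] ℝ) :
    E →ₗ[ℝ] E →ₗ[ℝ] E →ₗ[ℝ] E →ₗ[ℝ] ℝ :=
  (LinearMap.llcomp ℝ E _ _
    (LinearMap.llcomp ℝ E _ _
      (LinearMap.llcomp ℝ E _ _ (-(LinearMap.id : (E →ₗ[ℝ] ℝ) →ₗ[ℝ] (E →ₗ[ℝ] ℝ)))))) f

lemma negR_apply (f : E →ₗ[ℝ] E →ₗ[ℝ] E →ₗ[ℝ] E →ₗ[ℝ] ℝ) (x y z w : E) :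
    negR f x y z w = - f x y z w := rfl

noncomputable def negT (T : AlgCurvTensor E) : AlgCurvTensor E where
  R := negR T.R
  antisym_fst x y z w := by
    rw [negR_apply, negR_apply]
    have := T.antisym_fst x y z w
    linarith
  antisym_snd x y z w := by
    rw [negR_apply, negR_apply]
    have := T.antisym_snd x y z w
    linarith
  pair_symm x y z w := by
    rw [negR_apply, negR_apply]
    have := T.pair_symm x y z w
    linarith
  bianchi x y z w := by
    rw [negR_apply, negR_apply, negR_apply]
    have := T.bianchi x y z w
    linarith

lemma negT_apply (T : AlgCurvTensor E) (x y z w : E) :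
    (negT T).R x y z w = - T.R x y z w := rfl
end CVCaux

open CVCaux in
/-- For an algebraic curvature tensor on a `3`-dimensional inner product space with signed
sectional curvatures and `cvc(0)`, the following are equivalent:
(i) all sectional curvatures vanish;
(ii) there are two linearly independent unit vectors `v₁, v₂` whose Jacobi operators vanish
identically on their orthogonal complements (`R(w,vᵢ)vᵢ = 0` for all `w ⟂ vᵢ`, expressed by
the vanishing of all inner products `⟨R(w,vᵢ)vᵢ, u⟩ = R w vᵢ vᵢ u`);
(iii) the Jacobi operator of every unit vector vanishes identically on its orthogonal
complement. -/
theorem cvc0_isotropic_characterization {E : Type*} [NormedAddCommGroup E]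
    [InnerProductSpace ℝ E] [FiniteDimensional ℝ E] (hdim : Module.finrank ℝ E = 3)
    (T : AlgCurvTensor E) (hsigned : T.SignedSec) (hcvc : T.CVC0) :
    ((∀ x y : E, ‖x‖ = 1 → ‖y‖ = 1 → ⟪x, y⟫ = 0 → T.R x y y x = 0) ↔
      (∃ v₁ v₂ : E, ‖v₁‖ = 1 ∧ ‖v₂‖ = 1 ∧ LinearIndependent ℝ ![v₁, v₂] ∧
        (∀ w : E, ⟪v₁, w⟫ = 0 → ∀ u : E, T.R w v₁ v₁ u = 0) ∧
        (∀ w : E, ⟪v₂, w⟫ = 0 → ∀ u : E, T.R w v₂ v₂ u = 0))) ∧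
    ((∃ v₁ v₂ : E, ‖v₁‖ = 1 ∧ ‖v₂‖ = 1 ∧ LinearIndependent ℝ ![v₁, v₂] ∧
        (∀ w : E, ⟪v₁, w⟫ = 0 → ∀ u : E, T.R w v₁ v₁ u = 0) ∧
        (∀ w : E, ⟪v₂, w⟫ = 0 → ∀ u : E, T.R w v₂ v₂ u = 0)) ↔
      (∀ v : E, ‖v‖ = 1 → ∀ w : E, ⟪v, w⟫ = 0 → ∀ u : E, T.R w v v u = 0)) := by
  have b : OrthonormalBasis (Fin 3) ℝ E := (stdOrthonormalBasis ℝ E).reindex (finCongr hdim)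
  -- implication (ii) → R ≡ 0 :
  have D : (∃ v₁ v₂ : E, ‖v₁‖ = 1 ∧ ‖v₂‖ = 1 ∧ LinearIndependent ℝ ![v₁, v₂] ∧
        (∀ w : E, ⟪v₁, w⟫ = 0 → ∀ u : E, T.R w v₁ v₁ u = 0) ∧
        (∀ w : E, ⟪v₂, w⟫ = 0 → ∀ u : E, T.R w v₂ v₂ u = 0)) →
      ∀ x y z w : E, T.R x y z w = 0 := by
    rintro ⟨v₁, v₂, hv₁, hv₂, hli, h1, h2⟩
    rcases hsigned with hpos | hneg
    · exact main2 hdim b T hpos hv₁ hv₂ hli h1 h2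
    · have hpos' : ∀ x y : E, ‖x‖ = 1 → ‖y‖ = 1 → ⟪x, y⟫ = 0 → 0 ≤ (negT T).R x y y x := by
        intro x y hx hy hxy
        rw [negT_apply]
        linarith [hneg x y hx hy hxy]
      have h1' : ∀ w : E, ⟪v₁, w⟫ = 0 → ∀ u : E, (negT T).R w v₁ v₁ u = 0 := by
        intro w hw u; rw [negT_apply, h1 w hw u]; ring
      have h2' : ∀ w : E, ⟪v₂, w⟫ = 0 → ∀ u : E, (negT T).R w v₂ v₂ u = 0 := by
        intro w hw u; rw [negT_apply, h2 w hw u]; ring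
      intro x y z w
      have := main2 hdim b (negT T) hpos' hv₁ hv₂ hli h1' h2' x y z w
      rw [negT_apply] at this
      linarith
  -- implication (i) → R ≡ 0 :
  have A : (∀ x y : E, ‖x‖ = 1 → ‖y‖ = 1 → ⟪x, y⟫ = 0 → T.R x y y x = 0) →
      ∀ x y z w : E, T.R x y z w = 0 := main1 hdim b T
  -- R ≡ 0 → (iii) :
  have C : (∀ x y z w : E, T.R x y z w = 0) →
      ∀ v : E, ‖v‖ = 1 → ∀ w : E, ⟪v, w⟫ = 0 → ∀ u : E, T.R w v v u = 0 := by
    intro h v _ w _ u; exact h w v v u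
  -- (iii) → (i) :
  have PI : (∀ v : E, ‖v‖ = 1 → ∀ w : E, ⟪v, w⟫ = 0 → ∀ u : E, T.R w v v u = 0) →
      ∀ x y : E, ‖x‖ = 1 → ‖y‖ = 1 → ⟪x, y⟫ = 0 → T.R x y y x = 0 := by
    intro h x y hx hy hxy
    have hyx : ⟪y, x⟫ = 0 := by rw [real_inner_comm]; exact hxy
    exact h y hy x hyx x
  -- (iii) → (ii) :
  have PII : (∀ v : E, ‖v‖ = 1 → ∀ w : E, ⟪v, w⟫ = 0 → ∀ u : E, T.R w v v u = 0) →
      ∃ v₁ v₂ : E, ‖v₁‖ = 1 ∧ ‖v₂‖ = 1 ∧ LinearIndependent ℝ ![v₁, v₂] ∧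
        (∀ w : E, ⟪v₁, w⟫ = 0 → ∀ u : E, T.R w v₁ v₁ u = 0) ∧
        (∀ w : E, ⟪v₂, w⟫ = 0 → ∀ u : E, T.R w v₂ v₂ u = 0) := by
    intro h
    have h0 : ‖b 0‖ = 1 := b.orthonormal.1 0
    have h1 : ‖b 1‖ = 1 := b.orthonormal.1 1
    have h01 : ⟪b 1, b 0⟫ = 0 := b.orthonormal.2 (by decide)
    have hli : LinearIndependent ℝ ![b 0, b 1] := by
      rw [linearIndependent_fin2]
      simp only [Matrix.cons_val_zero, Matrix.cons_val_one, Matrix.head_cons]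
      constructor
      · intro hb1
        rw [hb1] at h1
        simp at h1
      · intro a ha
        have key : (⟪b 1, a • b 1⟫ : ℝ) = a := by
          rw [real_inner_smul_right, real_inner_self_eq_norm_mul_norm, h1]; ring
        rw [ha, h01] at key
        rw [← key, zero_smul] at ha
        rw [← ha] at h0
        simp at h0
    exact ⟨b 0, b 1, h0, h1, hli,
      fun w hw u => h (b 0) h0 w hw u, fun w hw u => h (b 1) h1 w hw u⟩
  refine ⟨⟨fun hi => PII (C (A hi)), fun hii => PI (C (D hii))⟩,
    ⟨fun hii => C (D hii), PII⟩⟩
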